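/- Let A ⊆ K be an integrally closed subring of a field K containing μ_n(K) and the inverse of the Vandermonde determinant of an ordering of μ_n(K). If α = Σ_{i=0}^{n−1} x_i t^i ∈ K[T]/(T^n−f) is integral over A, then each summand x_i t^i is integral over A. -/

import Mathlib

open Polynomial Matrix

lemma int_map {A R : Type*} [CommRing A] [CommRing R] (φ : A →+* R) (ψ : R →+* R)
    (hψ : ψ.comp φ = φ) {x : R} (hx : φ.IsIntegralElem x) : φ.IsIntegralElem (ψ x) := by
  obtain ⟨p, hm, hp⟩ := hx
  refine ⟨p, hm, ?_⟩
  conv_lhs => rw [← hψ]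
  rw [← Polynomial.hom_eval₂, hp, map_zero]

/-- Let `A ⊆ K` be a subring, integrally closed in `K`, containing `μ_n(K)` and the inverse of
the Vandermonde determinant of an ordering of `μ_n(K)`, with `char K ∤ n`, and `f ∈ Kˣ`.
If `α = Σ_{i=0}^{n-1} xᵢ tⁱ ∈ K[T]/(Tⁿ - f)` is integral over `A`, then each summand `xᵢ tⁱ`
is integral over `A`. -/
theorem stmt_11 (K : Type*) [Field K] (A : Subring K) (n : ℕ) (hn : 0 < n)
    (hchar : ¬ (ringChar K ∣ n))
    (hA : ∀ x : K, (A.subtype).IsIntegralElem x → x ∈ A)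
    (hμA : ∀ ζ : K, ζ ^ n = 1 → ζ ∈ A)
    (hvdm : ∃ e : Fin n → K, Function.Injective e ∧ (∀ i, (e i) ^ n = 1) ∧
      ∃ w ∈ A, w * ∏ p ∈ Finset.univ.filter (fun p : Fin n × Fin n => p.1 < p.2),
        (e p.2 - e p.1) = 1)
    (f : K) (hf : f ≠ 0) (c : Fin n → K)
    (hint : ((algebraMap K (AdjoinRoot (X ^ n - C f))).comp A.subtype).IsIntegralElem
      (∑ i : Fin n,
        algebraMap K (AdjoinRoot (X ^ n - C f)) (c i) * AdjoinRoot.root _ ^ (i : ℕ))) :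
    ∀ i : Fin n, ((algebraMap K (AdjoinRoot (X ^ n - C f))).comp A.subtype).IsIntegralElem
      (algebraMap K (AdjoinRoot (X ^ n - C f)) (c i) * AdjoinRoot.root _ ^ (i : ℕ)) := by
  obtain ⟨e, he_inj, he_pow, w, hwA, hw⟩ := hvdm
  set R := AdjoinRoot (X ^ n - C f) with hR
  set φK : K →+* R := algebraMap K R with hφK
  set φ : A →+* R := φK.comp A.subtype with hφ
  set r : R := AdjoinRoot.root (X ^ n - C f) with hr
  have hroot : r ^ n = φK f := by
    have h0 : AdjoinRoot.mk (X ^ n - C f) (X ^ n - C f) = 0 := AdjoinRoot.mk_self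
    rw [map_sub, map_pow, AdjoinRoot.mk_X, AdjoinRoot.mk_C, sub_eq_zero] at h0
    rw [hr, h0, hφK, AdjoinRoot.algebraMap_eq]
  have haev : ∀ ζ : K, ζ ^ n = 1 → aeval (φK ζ * r) (X ^ n - C f) = 0 := by
    intro ζ hζ
    rw [map_sub, map_pow, aeval_X, aeval_C, mul_pow, ← map_pow, hζ, _root_.map_one, one_mul,
      hroot, sub_self]
  set σ : Fin n → (R →ₐ[K] R) := fun j =>
    AdjoinRoot.liftAlgHom (X ^ n - C f) (Algebra.ofId K R) (φK (e j) * r) (haev (e j) (he_pow j)) with hσ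
  have hσr : ∀ j, σ j r = φK (e j) * r := fun j => AdjoinRoot.liftAlgHom_root ..
  have hσφ : ∀ j, ((σ j) : R →+* R).comp φ = φ := by
    intro j
    ext a
    simp [hφ, hφK]
  letI : Algebra A R := φ.toAlgebra
  have halg : algebraMap ↥A R = φ := rfl
  set α : R := ∑ i : Fin n, φK (c i) * r ^ (i : ℕ) with hα
  set x : Fin n → R := fun i => φK (c i) * r ^ (i : ℕ) with hx
  have hycl : ∀ j, σ j α ∈ integralClosure ↥A R := fun j =>
    int_map φ ((σ j) : R →+* R) (hσφ j) hint
  set V : Matrix (Fin n) (Fin n) K := Matrix.vandermonde e with hV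
  set M : Matrix (Fin n) (Fin n) R := φK.mapMatrix V with hM
  have hy : (fun j => σ j α) = M *ᵥ x := by
    funext j
    rw [hα, map_sum, Matrix.mulVec, dotProduct]
    refine Finset.sum_congr rfl fun i _ => ?_
    rw [_root_.map_mul, _root_.map_pow, hσr j, AlgHom.commutes, mul_pow, ← map_pow]
    simp [hM, hV, Matrix.vandermonde_apply, hx, RingHom.mapMatrix_apply, Matrix.map_apply,
      map_pow, mul_assoc, mul_left_comm]
    rfl
  have hkey : M.det • x = M.adjugate *ᵥ (fun j => σ j α) := by
    rw [hy, Matrix.mulVec_mulVec, Matrix.adjugate_mul, Matrix.smul_mulVec,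
      Matrix.one_mulVec]
  -- determinant of V and the filter product
  have hdetV : V.det = ∏ p ∈ Finset.univ.filter (fun p : Fin n × Fin n => p.1 < p.2),
      (e p.2 - e p.1) := by
    rw [hV, Matrix.det_vandermonde, Finset.prod_filter, ← Finset.univ_product_univ,
      Finset.prod_product]
    refine Finset.prod_congr rfl fun i _ => ?_
    rw [← Finset.prod_filter]
    congr 1
    ext j
    simp
  have hwdet : w * V.det = 1 := by rw [hdetV]; exact hw
  -- matrix over A
  set VA : Matrix (Fin n) (Fin n) A := fun i j => ⟨e i ^ (j : ℕ),
    A.pow_mem (hμA (e i) (he_pow i)) _⟩ with hVA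
  have hVmap : V = A.subtype.mapMatrix VA := by
    ext i j
    simp [hV, hVA, Matrix.vandermonde_apply, RingHom.mapMatrix_apply, Matrix.map_apply]
    rfl
  have hadjA : ∀ i j, V.adjugate i j ∈ A := by
    intro i j
    rw [hVmap, ← A.subtype.map_adjugate]
    exact (VA.adjugate i j).2
  have hMdet : M.det = φK V.det := (φK.map_det V).symm
  have hMadj : M.adjugate = φK.mapMatrix V.adjugate := (φK.map_adjugate V).symm
  intro i
  show (φK (c i) * r ^ (i : ℕ)) ∈ integralClosure ↥A R
  have hxi : x i = ∑ j : Fin n, (φ ⟨w * V.adjugate i j, A.mul_mem hwA (hadjA i j)⟩) * σ j α := by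
    have h1 : x i = φK w * (M.det • x) i := by
      simp only [Pi.smul_apply, smul_eq_mul, hMdet, ← mul_assoc, ← _root_.map_mul, hwdet, _root_.map_one,
        one_mul]
    rw [h1, hkey]
    rw [Matrix.mulVec, dotProduct, Finset.mul_sum]
    refine Finset.sum_congr rfl fun j _ => ?_
    rw [hMadj, hφ]
    simp only [RingHom.mapMatrix_apply, Matrix.map_apply]
    rw [RingHom.coe_comp, Function.comp_apply, Subring.coe_subtype, _root_.map_mul, mul_assoc]
  show x i ∈ integralClosure ↥A R
  rw [hxi]
  refine Subalgebra.sum_mem _ fun j _ => ?_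
  refine Subalgebra.mul_mem _ ?_ (hycl j)
  exact (integralClosure ↥A R).algebraMap_mem _
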